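/- If two nested programs P and Q have the same SE-models, then P and Q are equivalent (have the same answer sets). -/
import Mathlib


open scoped Classical

inductive Lit where
  | pos : ℕ → Lit
  | neg : ℕ → Lit
deriving DecidableEq

inductive Fml where
  | bot : Fml
  | top : Fml
  | lit : Lit → Fml
  | not : Fml → Fml
  | conj : Fml → Fml → Fml
  | disj : Fml → Fml → Fml
deriving DecidableEq

structure Rule where
  head : Fml
  body : Fml
deriving DecidableEq

abbrev Prog := Set Rule

/-- A set of literals is consistent if it contains no complementary pair. -/
def Consistent (X : Set Lit) : Prop :=
  ∀ a : ℕ, ¬ (Lit.pos a ∈ X ∧ Lit.neg a ∈ X)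

def Sat (X : Set Lit) : Fml → Prop
  | Fml.bot => False
  | Fml.top => True
  | Fml.lit l => l ∈ X
  | Fml.not F => ¬ Sat X F
  | Fml.conj F G => Sat X F ∧ Sat X G
  | Fml.disj F G => Sat X F ∨ Sat X G

def SatRule (X : Set Lit) (r : Rule) : Prop := Sat X r.body → Sat X r.head

def SatProg (X : Set Lit) (P : Prog) : Prop := ∀ r ∈ P, SatRule X r

/-- The reduct of a formula relative to X. -/
noncomputable def Reduct (X : Set Lit) : Fml → Fml
  | Fml.bot => Fml.bot
  | Fml.top => Fml.top
  | Fml.lit l => Fml.lit l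
  | Fml.not F => if Sat X F then Fml.bot else Fml.top
  | Fml.conj F G => Fml.conj (Reduct X F) (Reduct X G)
  | Fml.disj F G => Fml.disj (Reduct X F) (Reduct X G)

noncomputable def ReductRule (X : Set Lit) (r : Rule) : Rule :=
  ⟨Reduct X r.head, Reduct X r.body⟩

noncomputable def ReductProg (X : Set Lit) (P : Prog) : Prog :=
  ReductRule X '' P

/-- Y is an answer set for P: Y is minimal among consistent sets satisfying the reduct of P w.r.t. Y. -/
def AnswerSet (Y : Set Lit) (P : Prog) : Prop :=
  Consistent Y ∧ SatProg Y (ReductProg Y P) ∧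
    ∀ Z : Set Lit, Consistent Z → SatProg Z (ReductProg Y P) → Z ⊆ Y → Z = Y

def SEModel (P : Prog) (X Y : Set Lit) : Prop :=
  Consistent X ∧ Consistent Y ∧ X ⊆ Y ∧ SatProg Y P ∧ SatProg X (ReductProg Y P)

def StrongEq (P Q : Prog) : Prop :=
  ∀ R : Prog, ∀ Y : Set Lit, AnswerSet Y (P ∪ R) ↔ AnswerSet Y (Q ∪ R)

def Fml.negFree : Fml → Prop
  | Fml.bot => True
  | Fml.top => True
  | Fml.lit l => ∃ a, l = Lit.pos a
  | Fml.not F => F.negFree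
  | Fml.conj F G => F.negFree ∧ G.negFree
  | Fml.disj F G => F.negFree ∧ G.negFree

def ProgNegFree (P : Prog) : Prop := ∀ r ∈ P, r.head.negFree ∧ r.body.negFree

/-- The set of atoms (positive literals) in a set of literals. -/
def PosLits (Z : Set Lit) : Set Lit := {l ∈ Z | ∃ a, l = Lit.pos a}

def AtomsOnly (Z : Set Lit) : Prop := ∀ l ∈ Z, ∃ a, l = Lit.pos a

lemma sat_reduct_self (X : Set Lit) (F : Fml) : Sat X (Reduct X F) ↔ Sat X F := by
  induction F with
  | bot => rfl
  | top => rfl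
  | lit l => rfl
  | not F ih =>
    by_cases hF : Sat X F <;> simp [Reduct, hF, Sat]
  | conj F G ihF ihG => simp [Reduct, Sat, ihF, ihG]
  | disj F G ihF ihG => simp [Reduct, Sat, ihF, ihG]

lemma satProg_reduct_self (Y : Set Lit) (P : Prog) :
    SatProg Y (ReductProg Y P) ↔ SatProg Y P := by
  constructor
  · intro hs r hr hb
    have := hs (ReductRule Y r) ⟨r, hr, rfl⟩
    exact (sat_reduct_self _ _).1 (this ((sat_reduct_self _ _).2 hb))
  · rintro hs r ⟨s, hs', rfl⟩ hb
    have := hs s hs'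
    simpa [SatRule, ReductRule, sat_reduct_self] using this ((sat_reduct_self _ _).1 hb)

lemma as_of_se (P Q : Prog)
    (h : ∀ X Y : Set Lit, SEModel P X Y → SEModel Q X Y)
    (h' : ∀ X Y : Set Lit, SEModel Q X Y → SEModel P X Y)
    (Y : Set Lit) (hY : AnswerSet Y P) : AnswerSet Y Q := by
  obtain ⟨hc, hsat, hmin⟩ := hY
  have hYP : SatProg Y P := (satProg_reduct_self Y P).1 hsat
  have hse : SEModel Q Y Y := h Y Y ⟨hc, hc, subset_rfl, hYP, hsat⟩
  have hYQr : SatProg Y (ReductProg Y Q) := hse.2.2.2.2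
  refine ⟨hc, hYQr, ?_⟩
  intro Z hZc hZ hZY
  have hseQ : SEModel Q Z Y := ⟨hZc, hc, hZY, hse.2.2.2.1, hZ⟩
  have hseP := h' Z Y hseQ
  exact hmin Z hZc hseP.2.2.2.2 hZY

/-- Programs with the same SE-models are equivalent (same answer sets). -/
theorem stmt3 (P Q : Prog)
    (h : ∀ X Y : Set Lit, SEModel P X Y ↔ SEModel Q X Y) :
    ∀ Y : Set Lit, AnswerSet Y P ↔ AnswerSet Y Q := by
  intro Y
  constructor
  · exact as_of_se P Q (fun X Y => (h X Y).1) (fun X Y => (h X Y).2) Y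
  · exact as_of_se Q P (fun X Y => (h X Y).2) (fun X Y => (h X Y).1) Y
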